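/- Let V be a finite vertex set, E a set of unordered pairs of distinct elements of V, c : V → N a coloring of the vertices, and E_1, …, E_q further sets of unordered pairs of distinct elements of V (the negative samples). For an unordered pair e, let β(e) = {i ∈ {1,…,q} : e ∉ E_i}. For a vertex v ∈ V, a finite set of colors C, and a set I ⊆ {1,…,q}, say that Good(v, C, I) holds if there exist pairwise distinct vertices w_0, …, w_r (r ≥ 0) with w_r = v and {w_{s−1}, w_s} ∈ E for all 1 ≤ s ≤ r, such that c is injective on {w_0, …, w_r}, the image of {w_0, …, w_r} under c is exactly C, and ⋃_{s=1}^{r} β({w_{s−1}, w_s}) = I. Then for every v ∈ V, every C with c(v) ∈ C and |C| ≥ 2, and every I ⊆ {1,…,q}: Good(v, C, I) holds if and only if there exist a vertex u with {u, v} ∈ E and c(u) ∈ C \ {c(v)}, and a set I' ⊆ I with I' ∪ β({u, v}) = I, such that Good(u, C \ {c(v)}, I') holds. -/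

import Mathlib

private lemma iUnion_split {γ : Type*} (n : ℕ) (f : Fin (n+1) → Set γ) :
    (⋃ i, f i) = (⋃ i : Fin n, f i.castSucc) ∪ f (Fin.last n) := by
  ext x
  simp only [Set.mem_iUnion, Set.mem_union]
  constructor
  · rintro ⟨i, hi⟩
    induction i using Fin.lastCases with
    | last => exact Or.inr hi
    | cast j => exact Or.inl ⟨j, hi⟩
  · rintro (⟨i, hi⟩ | h) <;> exact ⟨_, by assumption⟩

private lemma range_snoc' {γ : Type*} (n : ℕ) (f : Fin (n+1) → γ) (a : γ) :
    Set.range (Fin.snoc f a : Fin (n+2) → γ) = insert a (Set.range f) := by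
  ext x
  simp only [Set.mem_range, Set.mem_insert_iff]
  constructor
  · rintro ⟨i, rfl⟩
    induction i using Fin.lastCases with
    | last => simp
    | cast j => simp
  · rintro (rfl | ⟨i, rfl⟩)
    · exact ⟨Fin.last _, by simp⟩
    · exact ⟨i.castSucc, by simp⟩

theorem stmt11 {α : Type*} [Fintype α] (q : ℕ)
    (E : Set (Sym2 α))
    (c : α → ℕ)
    (Es : Fin q → Set (Sym2 α))
    (β : Sym2 α → Set (Fin q)) (hβ : ∀ e, β e = {i | e ∉ Es i})
    (Good : α → Set ℕ → Set (Fin q) → Prop)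
    (hGood : ∀ v C I, Good v C I ↔ ∃ (r : ℕ) (w : Fin (r + 1) → α),
        Function.Injective w ∧ w (Fin.last r) = v ∧
        (∀ i : Fin r, s(w i.castSucc, w i.succ) ∈ E) ∧
        Set.InjOn c (Set.range w) ∧ c '' Set.range w = C ∧
        (⋃ i : Fin r, β (s(w i.castSucc, w i.succ))) = I)
    (v : α) (C : Set ℕ) (hCfin : C.Finite) (hvC : c v ∈ C) (hC2 : 2 ≤ C.ncard)
    (I : Set (Fin q)) :
    Good v C I ↔ ∃ u : α, s(u, v) ∈ E ∧ c u ∈ C \ {c v} ∧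
      ∃ I' ⊆ I, I' ∪ β (s(u, v)) = I ∧ Good u (C \ {c v}) I' := by
  constructor
  · intro h
    rw [hGood] at h
    obtain ⟨r, w, hwinj, hwlast, hE, hcinj, hcim, hI⟩ := h
    -- r ≥ 1
    obtain ⟨r', rfl⟩ : ∃ r', r = r' + 1 := by
      cases r with
      | zero =>
        exfalso
        have : C = {c (w 0)} := by
          rw [← hcim]
          have : Set.range w = {w 0} := by
            ext x; simp only [Set.mem_range, Set.mem_singleton_iff]
            constructor
            · rintro ⟨i, rfl⟩; rw [Fin.eq_zero i]
            · rintro rfl; exact ⟨0, rfl⟩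
          rw [this, Set.image_singleton]
        rw [this] at hC2
        simp [Set.ncard_singleton] at hC2
      | succ r' => exact ⟨r', rfl⟩
    set u := w (Fin.last r').castSucc with hu
    have hne : (Fin.last r').castSucc ≠ Fin.last (r' + 1) := by
      simp [Fin.ext_iff]
    have huv : u ≠ v := by
      rw [← hwlast]; exact fun h => hne (hwinj h)
    have hvrange : v ∈ Set.range w := ⟨Fin.last _, hwlast⟩
    have hurange : u ∈ Set.range w := ⟨_, rfl⟩
    have hcuv : c u ≠ c v := fun h => huv (hcinj hurange hvrange h)
    have hedge : s(u, v) ∈ E := by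
      have := hE (Fin.last r')
      rwa [Fin.succ_last, hwlast] at this
    refine ⟨u, hedge, ⟨hcim ▸ ⟨_, hurange, rfl⟩, hcuv⟩, ?_⟩
    -- shortened path
    set w' : Fin (r' + 1) → α := fun i => w i.castSucc with hw'
    have hwsplit : (Set.range w) = insert v (Set.range w') := by
      have : w = Fin.snoc w' v := by
        funext i
        induction i using Fin.lastCases with
        | last => rw [hwlast]; simp
        | cast j => simp [hw']
      rw [this, range_snoc']
    have hvnot : v ∉ Set.range w' := by
      rintro ⟨i, hi⟩
      rw [← hwlast] at hi
      have := hwinj hi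
      exact absurd this (by simp [Fin.ext_iff, Fin.lt_iff_val_lt_val]; omega)
    have hrange' : Set.range w' ⊆ Set.range w := by
      rintro x ⟨i, rfl⟩; exact ⟨_, rfl⟩
    have hcim' : c '' Set.range w' = C \ {c v} := by
      ext x
      constructor
      · rintro ⟨y, hy, rfl⟩
        refine ⟨hcim ▸ ⟨y, hrange' hy, rfl⟩, ?_⟩
        simp only [Set.mem_singleton_iff]
        intro hcy
        exact hvnot (hcinj (hrange' hy) hvrange hcy ▸ hy)
      · rintro ⟨hx, hxv⟩
        rw [← hcim] at hx
        obtain ⟨y, hy, rfl⟩ := hx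
        rw [hwsplit] at hy
        rcases hy with rfl | hy
        · exact absurd rfl hxv
        · exact ⟨y, hy, rfl⟩
    set I' : Set (Fin q) := ⋃ i : Fin r', β (s(w' i.castSucc, w' i.succ)) with hI'
    have hsplitI : I' ∪ β (s(u, v)) = I := by
      rw [← hI, iUnion_split]
      congr 1
      rw [Fin.succ_last, hwlast, ← hu]
    refine ⟨I', ?_, hsplitI, ?_⟩
    · rw [← hsplitI]; exact Set.subset_union_left
    · rw [hGood]
      refine ⟨r', w', fun a b hab => ?_, rfl, fun i => ?_, hcinj.mono hrange', hcim', rfl⟩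
      · have := hwinj hab
        exact Fin.castSucc_injective _ this
      · have := hE i.castSucc
        have h1 : w' i.castSucc = w i.castSucc.castSucc := rfl
        have h2 : w' i.succ = w i.castSucc.succ := by
          simp only [hw', Fin.succ_castSucc]
        rw [h1, h2]; exact this
  · rintro ⟨u, hedge, ⟨hcuC, hcuv⟩, I', hI'sub, hIeq, hgood⟩
    rw [hGood] at hgood
    obtain ⟨r, w, hwinj, hwlast, hE, hcinj, hcim, hI⟩ := hgood
    rw [hGood]
    refine ⟨r + 1, Fin.snoc w v, ?_, by simp, ?_, ?_, ?_, ?_⟩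
    · -- injective
      have hvnot : v ∉ Set.range w := by
        intro hv
        have : c v ∈ C \ {c v} := hcim ▸ ⟨v, hv, rfl⟩
        exact this.2 rfl
      intro a b hab
      induction a using Fin.lastCases with
      | last =>
        induction b using Fin.lastCases with
        | last => rfl
        | cast j => simp at hab; exact absurd ⟨j, hab.symm⟩ hvnot
      | cast i =>
        induction b using Fin.lastCases with
        | last => simp at hab; exact absurd ⟨i, hab⟩ hvnot
        | cast j => simp at hab; rw [hwinj hab]
    · -- edges
      intro i
      induction i using Fin.lastCases with
      | last =>
        rw [Fin.succ_last]
        simp only [Fin.snoc_last, Fin.snoc_castSucc, hwlast]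
        exact hedge
      | cast j =>
        rw [Fin.succ_castSucc]
        simp only [Fin.snoc_castSucc]
        exact hE j
    · -- InjOn c
      rw [range_snoc']
      intro a ha b hb hab
      have hvim : ∀ x ∈ Set.range w, c x ≠ c v := by
        intro x hx hcx
        have : c x ∈ C \ {c v} := hcim ▸ ⟨x, hx, rfl⟩
        exact this.2 hcx
      rcases ha with rfl | ha <;> rcases hb with rfl | hb
      · rfl
      · exact absurd hab.symm (hvim b hb)
      · exact absurd hab (hvim a ha)
      · exact hcinj ha hb hab
    · -- image
      rw [range_snoc', Set.image_insert_eq, hcim]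
      ext x
      simp only [Set.mem_insert_iff, Set.mem_diff, Set.mem_singleton_iff]
      constructor
      · rintro (rfl | ⟨hx, _⟩) <;> [exact hvC; exact hx]
      · intro hx
        by_cases hxv : x = c v
        · exact Or.inl hxv
        · exact Or.inr ⟨hx, hxv⟩
    · -- union
      rw [iUnion_split]
      have h1 : (⋃ i : Fin r, β (s((Fin.snoc w v : Fin (r+2) → α) i.castSucc.castSucc,
          (Fin.snoc w v : Fin (r+2) → α) i.castSucc.succ))) = I' := by
        rw [← hI]
        apply Set.iUnion_congr
        intro i
        rw [Fin.succ_castSucc]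
        simp only [Fin.snoc_castSucc]
      have h2 : β (s((Fin.snoc w v : Fin (r+2) → α) (Fin.last r).castSucc,
          (Fin.snoc w v : Fin (r+2) → α) (Fin.last r).succ)) = β (s(u, v)) := by
        rw [Fin.succ_last]
        simp [hwlast]
      rw [h1, h2, hIeq]
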